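/- Let z ∈ ℂ and let z₁, …, z_K ∈ ℂ be pairwise distinct. Let v = (1, z, z², …, z^K) ∈ ℂ^{K+1} and v_k = (1, z_k, z_k², …, z_k^K) ∈ ℂ^{K+1} for k = 1,…,K. Then the standard ℓ² distance ρ in ℂ^{K+1} from v to the linear span of {v₁,…,v_K} equals ρ = ∏_{k=1}^K |z − z_k| / (1 + Σ_{q=1}^K |Σ_{1≤k₁<…<k_q≤K} ∏_{t=1}^q z_{k_t}|²)^{1/2}, where the inner sums are the elementary symmetric polynomials e_q(z₁,…,z_K). -/

import Mathlib

open Polynomial in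
/-- the ℓ² distance in ℂ^{K+1} from `v = (1, z, …, z^K)` to the span of the
Vandermonde vectors `v_k = (1, z_k, …, z_k^K)` (with `z₁,…,z_K` pairwise distinct) equals
`∏|z - z_k| / (1 + Σ_{q=1}^K |e_q(z₁,…,z_K)|²)^{1/2}`. -/
theorem dist_to_vandermonde_span
    (K : ℕ) (z : ℂ) (zs : Fin K → ℂ) (hzs : Function.Injective zs) :
    Metric.infDist
        ((WithLp.equiv 2 (Fin (K + 1) → ℂ)).symm (fun i : Fin (K + 1) => z ^ (i : ℕ)))
        ((Submodule.span ℂ (Set.range fun k : Fin K =>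
            (WithLp.equiv 2 (Fin (K + 1) → ℂ)).symm (fun i : Fin (K + 1) => zs k ^ (i : ℕ))) :
          Submodule ℂ (EuclideanSpace ℂ (Fin (K + 1)))) : Set (EuclideanSpace ℂ (Fin (K + 1))))
      = (∏ k, ‖z - zs k‖) /
          Real.sqrt (1 + ∑ q ∈ Finset.Icc 1 K,
            ‖∑ t ∈ Finset.univ.powersetCard q, ∏ k ∈ t, zs k‖ ^ 2) := by
  classical
  set E := EuclideanSpace ℂ (Fin (K + 1))
  set vec : ℂ → E := fun x => (WithLp.equiv 2 (Fin (K + 1) → ℂ)).symm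
      (fun i : Fin (K + 1) => x ^ (i : ℕ)) with hvec
  set P : Polynomial ℂ := ∏ k, (X - C (zs k)) with hP
  have hPm : P.Monic := monic_prod_of_monic _ _ fun k _ => monic_X_sub_C _
  have hPdeg : P.natDegree = K := by
    rw [hP, natDegree_prod _ _ (fun k _ => X_sub_C_ne_zero _)]
    simp [natDegree_X_sub_C]
  set u : E := (WithLp.equiv 2 (Fin (K + 1) → ℂ)).symm
      (fun i : Fin (K + 1) => (starRingEnd ℂ) (P.coeff i)) with hu
  have hcoeffK : P.coeff K = 1 := by
    have := hPm.coeff_natDegree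
    rwa [hPdeg] at this
  have hune : u ≠ 0 := by
    intro h
    have : (starRingEnd ℂ) (P.coeff K) = 0 := congrFun (congrArg (WithLp.equiv 2 _) h) (Fin.last K)
    simp [hcoeffK] at this
  have hinner : ∀ x : ℂ, (inner ℂ u (vec x) : ℂ) = P.eval x := by
    intro x
    have : (inner ℂ u (vec x) : ℂ) = ∑ i : Fin (K + 1), P.coeff i * x ^ (i : ℕ) := by
      rw [PiLp.inner_apply]
      simp [hu, hvec, RCLike.inner_apply, mul_comm]
    rw [this, P.eval_eq_sum_range' (by omega : P.natDegree < K + 1),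
      ← Fin.sum_univ_eq_sum_range (fun i => P.coeff i * x ^ i)]
  set S : Submodule ℂ E := ℂ ∙ u with hS
  set W : Submodule ℂ E := Submodule.span ℂ (Set.range fun k : Fin K => vec (zs k)) with hW
  have hWS : W = Sᗮ := by
    have hle : W ≤ Sᗮ := by
      rw [hW, Submodule.span_le]
      rintro _ ⟨k, rfl⟩
      rw [SetLike.mem_coe, Submodule.mem_orthogonal_singleton_iff_inner_right]
      rw [hinner]
      rw [hP]
      simp [Polynomial.eval_prod, Finset.prod_eq_zero (Finset.mem_univ k)]
    have hind : LinearIndependent ℂ (fun k : Fin K => vec (zs k)) := by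
      have hMu : IsUnit (Matrix.vandermonde zs) := by
        rw [Matrix.isUnit_iff_isUnit_det, isUnit_iff_ne_zero, Matrix.det_vandermonde]
        apply Finset.prod_ne_zero_iff.mpr
        intro i _
        apply Finset.prod_ne_zero_iff.mpr
        intro j hj
        simp only [Finset.mem_Ioi] at hj
        exact sub_ne_zero.mpr fun h => hj.ne' (hzs h)
      have hrows : LinearIndependent ℂ (fun k : Fin K => Matrix.vandermonde zs k) :=
        Matrix.linearIndependent_rows_iff_isUnit.2 hMu
      set L : E →ₗ[ℂ] (Fin K → ℂ) :=
        (LinearMap.funLeft ℂ ℂ Fin.castSucc).comp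
          (WithLp.linearEquiv 2 ℂ (Fin (K + 1) → ℂ)).toLinearMap with hL
      apply LinearIndependent.of_comp L
      have hcomp : (L ∘ fun k : Fin K => vec (zs k)) = fun k : Fin K => Matrix.vandermonde zs k := by
        funext k j
        rfl
      rw [hcomp]
      exact hrows
    have h1 : Module.finrank ℂ W = K := by
      rw [hW, finrank_span_eq_card hind, Fintype.card_fin]
    have h2 : Module.finrank ℂ Sᗮ = K := by
      have hS1 : Module.finrank ℂ S = 1 := finrank_span_singleton hune
      have := Submodule.finrank_add_finrank_orthogonal (K := S)
      rw [hS1, finrank_euclideanSpace_fin] at this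
      omega
    exact Submodule.eq_of_le_of_finrank_eq hle (by rw [h1, h2])
  -- distance computation
  have hproj : Metric.infDist (vec z) (W : Set E) = ‖S.starProjection (vec z)‖ := by
    rw [Metric.infDist_eq_iInf]
    have : ∀ y : (W : Set E), dist (vec z) y = ‖vec z - y‖ := fun y => dist_eq_norm _ _
    rw [iInf_congr this]
    have hmin : ‖vec z - W.starProjection (vec z)‖ = ⨅ x : W, ‖vec z - x‖ :=
      Submodule.starProjection_minimal (vec z)
    have : (⨅ y : (W : Set E), ‖vec z - y‖) = ⨅ x : W, ‖vec z - x‖ := rfl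
    rw [this, ← hmin]
    congr 1
    have := Submodule.starProjection_add_starProjection_orthogonal (K := S) (vec z)
    rw [hWS]
    rw [eq_sub_iff_add_eq.mpr this]
  rw [hproj, Submodule.starProjection_singleton, norm_smul, hinner]
  have habs : ‖P.eval z‖ = ∏ k, ‖z - zs k‖ := by
    rw [hP]
    simp [Polynomial.eval_prod, map_prod]
  have hnu : ‖u‖ = Real.sqrt (1 + ∑ q ∈ Finset.Icc 1 K,
      ‖∑ t ∈ Finset.univ.powersetCard q, ∏ k ∈ t, zs k‖ ^ 2) := by
    have hcoeff : ∀ q : ℕ, q ≤ K → ‖P.coeff (K - q)‖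
        = ‖∑ t ∈ Finset.univ.powersetCard q, ∏ k ∈ t, zs k‖ := by
      intro q hq
      have hcard : Multiset.card ((Finset.univ : Finset (Fin K)).val.map zs) = K := by simp
      have hPP : P = (((Finset.univ : Finset (Fin K)).val.map zs).map (fun t => X - C t)).prod := by
        rw [hP, Finset.prod, Multiset.map_map]; rfl
      have hle' : K - q ≤ Multiset.card ((Finset.univ : Finset (Fin K)).val.map zs) := by
        rw [hcard]; omega
      rw [hPP, Multiset.prod_X_sub_C_coeff _ hle', hcard, Nat.sub_sub_self hq,
        Finset.esymm_map_val]
      simp [map_mul, map_pow]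
    have h1 : ‖u‖ = Real.sqrt (∑ i ∈ Finset.range (K + 1), ‖P.coeff i‖ ^ 2) := by
      rw [EuclideanSpace.norm_eq,
        ← Fin.sum_univ_eq_sum_range (fun i => ‖P.coeff i‖ ^ 2)]
      congr 1
      refine Finset.sum_congr rfl fun i _ => ?_
      simp [hu]
    rw [h1]
    congr 1
    rw [← Finset.sum_range_reflect (fun q => ‖P.coeff q‖ ^ 2) (K + 1)]
    have hsplit : Finset.range (K + 1) = insert 0 (Finset.Icc 1 K) := by
      ext x; simp only [Finset.mem_range, Finset.mem_insert, Finset.mem_Icc]; omega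
    rw [hsplit, Finset.sum_insert (by simp)]
    congr 1
    · have : K + 1 - 1 - 0 = K - 0 := rfl
      simp [hcoeffK]
    · refine Finset.sum_congr rfl fun q hq => ?_
      have hq' : q ≤ K := (Finset.mem_Icc.mp hq).2
      have : K + 1 - 1 - q = K - q := by omega
      rw [this, hcoeff q hq']
  have hnupos : (0:ℝ) < ‖u‖ := norm_pos_iff.mpr hune
  rw [← habs, ← hnu, norm_div, RCLike.norm_ofReal,
    abs_of_nonneg (by positivity : (0:ℝ) ≤ ‖u‖ ^ 2)]
  field_simp
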